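/- arXiv:1112.2801 — 6 statements merged into one kernel-verified Lean document; each statement's English description precedes it below -/
import Mathlib

section
/- Every better elastic set system is a finitely elastic set system: if qo(𝓛) is a BQO (in particular, a WQO), then 𝓛 admits no infinite bad learning sequence. -/
/-- Every better elastic set system is finitely elastic: if `qo(𝓛)` is a WQO
(in particular if it is a BQO), then `𝓛` admits no infinite bad learning sequence. -/
theorem bess_is_fess {T : Type*} (𝓛 : Set (Set T))
    (hwqo : ∀ f : ℕ → T, (∀ n, f n ∈ ⋃₀ 𝓛) →
      ∃ i j, i < j ∧ ∀ L ∈ 𝓛, f i ∈ L → f j ∈ L) :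
    ¬ ∃ (t : ℕ → T) (A : ℕ → Set T),
      ∀ i, A i ∈ 𝓛 ∧ (∀ j ≤ i, t j ∈ A i) ∧ t (i + 1) ∉ A i := by
  rintro ⟨t, A, h⟩
  obtain ⟨i, j, hij, hle⟩ := hwqo t (fun n => ⟨A n, (h n).1, (h n).2.1 n le_rfl⟩)
  obtain ⟨j, rfl⟩ : ∃ k, j = k + 1 := ⟨j - 1, (Nat.succ_pred_eq_of_pos (Nat.pos_of_ne_zero (by omega))).symm⟩
  exact (h j).2.2 (hle _ (h j).1 ((h j).2.1 i (Nat.lt_succ_iff.mp hij)))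
end

section
/- If qo(𝓛) is a WQO for a set system 𝓛, then every infinite sequence in 𝓛̂ = {⋃𝓜 : ∅ ≠ 𝓜 ⊆ 𝓛} admits no infinite bad learning sequence; i.e., the closure of 𝓛 under arbitrary nonempty unions is a finitely elastic set system. -/
/-- If `qo(𝓛)` is a WQO, then `𝓛̂ = {⋃𝓜 : ∅ ≠ 𝓜 ⊆ 𝓛}`, the closure of `𝓛` under
arbitrary nonempty unions, admits no infinite bad learning sequence. -/
theorem hatL_fess_of_wqo {T : Type*} (𝓛 : Set (Set T))
    (hwqo : ∀ f : ℕ → T, (∀ n, f n ∈ ⋃₀ 𝓛) →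
      ∃ i j, i < j ∧ ∀ L ∈ 𝓛, f i ∈ L → f j ∈ L) :
    ¬ ∃ (t : ℕ → T) (A : ℕ → Set T),
      ∀ i, (A i ∈ {U : Set T | ∃ 𝓜 : Set (Set T), 𝓜 ⊆ 𝓛 ∧ 𝓜.Nonempty ∧ U = ⋃₀ 𝓜}) ∧
        (∀ j ≤ i, t j ∈ A i) ∧ t (i + 1) ∉ A i := by
  rintro ⟨t, A, h⟩
  have hmem : ∀ n, t n ∈ ⋃₀ 𝓛 := by
    intro n
    obtain ⟨⟨𝓜, h𝓜L, -, hU⟩, hin, -⟩ := h n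
    have := hin n le_rfl
    rw [hU] at this
    obtain ⟨L, hL, htL⟩ := this
    exact ⟨L, h𝓜L hL, htL⟩
  obtain ⟨i, j, hij, hLe⟩ := hwqo t hmem
  obtain ⟨j, rfl⟩ : ∃ k, j = k + 1 := ⟨j - 1, (Nat.succ_pred_eq_of_pos (Nat.pos_of_ne_zero (by omega))).symm⟩
  obtain ⟨⟨𝓜, h𝓜L, -, hU⟩, hin, hout⟩ := h j
  apply hout
  have hti : t i ∈ A j := hin i (Nat.lt_succ_iff.mp hij)
  rw [hU] at hti ⊢
  obtain ⟨L, hL, htL⟩ := hti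
  exact ⟨L, hL, hLe L (h𝓜L hL) htL⟩
end

section
/- If the set system 𝓛^{<ω} of finite nonempty unions of members of 𝓛 has an infinite bad learning sequence, then the powerset ordering (P(⋃𝓛), ⪯∀∃) induced by qo(𝓛) is not a WQO. -/
/-- If `𝓛^{<ω}` (finite nonempty unions of members of `𝓛`) has an infinite bad learning
sequence, then the powerset ordering `⪯∀∃` induced by `qo(𝓛)` is not a WQO. -/
theorem powerset_not_wqo_of_bad_sequence {T : Type*} (𝓛 : Set (Set T))
    (hbad : ∃ (t : ℕ → T) (A : ℕ → Set T),
      ∀ i, (A i ∈ {U : Set T | ∃ 𝓜 : Set (Set T),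
          𝓜 ⊆ 𝓛 ∧ 𝓜.Nonempty ∧ 𝓜.Finite ∧ U = ⋃₀ 𝓜}) ∧
        (∀ j ≤ i, t j ∈ A i) ∧ t (i + 1) ∉ A i) :
    ¬ ∀ v : ℕ → Set T, (∀ n, v n ⊆ ⋃₀ 𝓛) →
      ∃ i j, i < j ∧ ∀ x' ∈ v j, ∃ x ∈ v i, ∀ L ∈ 𝓛, x ∈ L → x' ∈ L := by
  intro h
  obtain ⟨t, A, hA⟩ := hbad
  obtain ⟨i, j, hij, hmaj⟩ := h (fun n => {t n}) (by
    intro n x hx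
    rcases hx with rfl
    obtain ⟨⟨𝓜, h𝓜, _, _, hU⟩, hmem, _⟩ := hA n
    have : t n ∈ A n := hmem n le_rfl
    rw [hU] at this
    obtain ⟨L, hL, htL⟩ := this
    exact ⟨L, h𝓜 hL, htL⟩)
  obtain ⟨x, hx, hle⟩ := hmaj (t j) rfl
  rcases hx with rfl
  obtain ⟨⟨𝓜, h𝓜, _, _, hU⟩, hmem, hnot⟩ := hA (j - 1)
  have hi : t i ∈ A (j - 1) := hmem i (by omega)
  rw [hU] at hi
  obtain ⟨L, hL, htL⟩ := hi
  have : t j ∈ A (j - 1) := by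
    rw [hU]
    exact ⟨L, hL, hle L (h𝓜 hL) htL⟩
  have hj : j - 1 + 1 = j := by omega
  rw [hj] at hnot
  exact hnot this
end

section
/- For the set system 𝓛₁ = { {i} ∪ {k : k ≥ j} : i, j ∈ ℕ } over ℕ, the induced quasi-ordering qo(𝓛₁) equals equality on ℕ, and hence is not a WQO. -/
/-- For `𝓛₁ = { {i} ∪ {k : k ≥ j} : i, j ∈ ℕ }`, the induced quasi-ordering `qo(𝓛₁)` is
equality on `ℕ`, hence not a WQO. -/
theorem qo_L1_is_equality :
    (∀ x y : ℕ,
      (∀ L ∈ {L : Set ℕ | ∃ i j : ℕ, L = {i} ∪ {k | j ≤ k}}, x ∈ L → y ∈ L) ↔ x = y) ∧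
      ¬ ∀ f : ℕ → ℕ, ∃ i j, i < j ∧
        ∀ L ∈ {L : Set ℕ | ∃ i j : ℕ, L = {i} ∪ {k | j ≤ k}}, f i ∈ L → f j ∈ L := by
  have key : ∀ x y : ℕ,
      (∀ L ∈ {L : Set ℕ | ∃ i j : ℕ, L = {i} ∪ {k | j ≤ k}}, x ∈ L → y ∈ L) ↔ x = y := by
    intro x y
    constructor
    · intro h
      have := h ({x} ∪ {k | y + 1 ≤ k}) ⟨x, y + 1, rfl⟩ (Or.inl rfl)
      rcases this with h' | h'
      · exact h'.symm
      · exact absurd h' (by simp)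
    · rintro rfl _ _ h; exact h
  refine ⟨key, fun h => ?_⟩
  obtain ⟨i, j, hij, hle⟩ := h id
  exact absurd ((key i j).mp hle) hij.ne
end

section
/- Let F : {(i,j) : i < j, i,j ∈ ℕ} → P(ℕ) be defined by F(i,j) = {i} ∪ {k : k > j}. Then the family 𝓛₁ ordered by reverse inclusion fails the Rado condition: F(i,j) ⊋ F(i,j+1) for all i < j, but there are no i < j < k with F(i,j) ⊋ F(j,k); in particular, the partial ordering ({F(i,j) : i<j}, ⊇) is not a BQO via the ω²-WQO characterization. -/
/-- With `F i j = {i} ∪ {k : k > j}` for `i < j`: (a) `F i j ⊋ F i (j+1)` for all `i < j`,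
and (b) there are no `i < j < k` with `F i j ⊇ F j k`; the Rado counterexample. -/
theorem rado_counterexample :
    (∀ i j : ℕ, i < j →
      (({i} ∪ {k | j + 1 < k} : Set ℕ) ⊂ ({i} ∪ {k | j < k} : Set ℕ))) ∧
      ∀ i j k : ℕ, i < j → j < k →
        ¬ (({j} ∪ {m | k < m} : Set ℕ) ⊆ ({i} ∪ {m | j < m} : Set ℕ)) := by
  constructor
  · intro i j hij
    constructor
    · intro x hx
      rcases hx with hx | hx
      · exact Or.inl hx
      · exact Or.inr (Nat.lt_of_succ_lt hx)
    · intro h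
      have := h (Or.inr (Nat.lt_succ_self j) : (j+1 : ℕ) ∈ ({i} ∪ {k | j < k} : Set ℕ))
      rcases this with h1 | h1
      · simp only [Set.mem_singleton_iff] at h1; omega
      · simp only [Set.mem_setOf_eq] at h1; omega
  · intro i j k hij hjk h
    have := h (Or.inl rfl : (j : ℕ) ∈ ({j} ∪ {m | k < m} : Set ℕ))
    rcases this with h1 | h1
    · simp only [Set.mem_singleton_iff] at h1; omega
    · simp only [Set.mem_setOf_eq] at h1; omega
end

section
/- For an FESS 𝓛, 𝓛 has no infinite antichain with respect to set inclusion if and only if (𝓛, ⊇) is a WQO. -/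
/-- For an FESS `𝓛`: `𝓛` has no infinite `⊆`-antichain iff `(𝓛, ⊇)` is a WQO. -/
theorem fess_nia_iff_wqo {T : Type*} (𝓛 : Set (Set T))
    (hfess : ¬ ∃ (t : ℕ → T) (A : ℕ → Set T),
      ∀ i, A i ∈ 𝓛 ∧ (∀ j ≤ i, t j ∈ A i) ∧ t (i + 1) ∉ A i) :
    (¬ ∃ f : ℕ → Set T, (∀ n, f n ∈ 𝓛) ∧ ∀ i j, i ≠ j → ¬ f i ⊆ f j) ↔
      ∀ f : ℕ → Set T, (∀ n, f n ∈ 𝓛) → ∃ i j, i < j ∧ f j ⊆ f i := by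
  constructor
  · intro hNA f hf
    by_contra hbad
    push_neg at hbad
    obtain ⟨g, hg | hg⟩ := exists_increasing_or_nonincreasing_subseq
      (fun A B : Set T => A ⊂ B) f
    · -- strictly increasing chain: contradicts FESS
      have hne : ∀ i : ℕ, ((f (g (i + 1))) \ (f (g i))).Nonempty := by
        intro i
        have h := hg i (i + 1) (Nat.lt_succ_self i)
        exact Set.nonempty_of_ssubset h
      choose t ht using hne
      refine absurd ⟨t, fun i => f (g (i + 1)), fun i => ⟨hf _, ?_, ?_⟩⟩ hfess
      · intro j hj
        rcases eq_or_lt_of_le hj with rfl | hlt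
        · exact (ht j).1
        · exact (hg (j + 1) (i + 1) (by omega)).1 (ht j).1
      · exact fun h => (ht (i + 1)).2 h
    · -- antichain: contradicts hNA
      refine hNA ⟨fun n => f (g n), fun n => hf _, fun i j hij hsub => ?_⟩
      rcases lt_or_gt_of_ne hij with h | h
      · rcases eq_or_ne (f (g i)) (f (g j)) with heq | hne
        · exact hbad (g i) (g j) (g.strictMono h) (heq ▸ subset_rfl)
        · exact hg i j h ⟨hsub, fun h2 => hne (le_antisymm hsub h2)⟩
      · exact hbad (g j) (g i) (g.strictMono h) hsub
  · intro hwqo ⟨f, hf, hanti⟩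
    obtain ⟨i, j, hij, hsub⟩ := hwqo f hf
    exact hanti j i hij.ne' hsub
end
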